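/- arXiv:math/0310226 — 3 statements merged into one kernel-verified Lean document; each statement's English description precedes it below -/
import Mathlib

section
/- Let W = λ A_φ where φ is a g-self-adjoint isometry with φ² = Id, and suppose both eigenspaces of φ are nonzero. If Tr(J_W(x)) = 0 for all x, then λ = 0. (Proof idea: if a^± are the dimensions of the ±1 eigenspaces and e^± are non-null vectors therein with g(e^±,e^±) = ε^±, then Tr(J_W(e^+)) = ε^+ λ (a^+ − 1 − a^−) and Tr(J_W(e^−)) = ε^− λ (a^− − 1 − a^+), forcing λ = 0.) -/
lemma trace_smulRight' {V : Type*} [AddCommGroup V] [Module ℝ V] [FiniteDimensional ℝ V]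
    (f : V →ₗ[ℝ] ℝ) (v : V) :
    LinearMap.trace ℝ V (f.smulRight v) = f v := by
  have h : f.smulRight v = dualTensorHom ℝ V V (f ⊗ₜ v) := by
    ext x; simp [dualTensorHom_apply]
  rw [h, LinearMap.trace_eq_contract_apply, contractLeft_apply]

/-- If `W = λ A_φ` with `φ` a g-self-adjoint isometry, `φ² = Id`, both
eigenspaces nonzero, and `Tr(J_W(x)) = 0` for all `x`, then `λ = 0`. -/
theorem stmt9 {V : Type*} [AddCommGroup V] [Module ℝ V] [FiniteDimensional ℝ V]
    (g : V →ₗ[ℝ] V →ₗ[ℝ] ℝ)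
    (hg_symm : ∀ x y, g x y = g y x)
    (hg_nd : ∀ v, (∀ w, g v w = 0) → v = 0)
    (φ : V →ₗ[ℝ] V)
    (hφ_sa : ∀ x y, g (φ x) y = g x (φ y))
    (hφ_iso : ∀ x y, g (φ x) (φ y) = g x y)
    (hφ2 : ∀ x, φ (φ x) = x)
    (hplus : ∃ v, v ≠ 0 ∧ φ v = v)
    (hminus : ∃ v, v ≠ 0 ∧ φ v = -v)
    (lam : ℝ)
    (W : V → V → V → V → ℝ)
    (hW : ∀ x y z w, W x y z w =
      lam * (g (φ x) w * g (φ y) z - g (φ x) z * g (φ y) w))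
    (J : V → V →ₗ[ℝ] V)
    (hJ : ∀ x y z, g (J x y) z = W y x x z)
    (htr : ∀ x, LinearMap.trace ℝ V (J x) = 0) :
    lam = 0 := by
  -- J x = lam • (g (φ x) x • φ - rank one)
  set t : ℝ := LinearMap.trace ℝ V φ with ht
  -- key trace formula
  have key : ∀ x : V, lam * (g (φ x) x * t - g x x) = 0 := by
    intro x
    have hform : J x = lam • ((g (φ x) x) • φ - ((g ∘ₗ φ).flip x).smulRight (φ x)) := by
      apply LinearMap.ext
      intro y
      apply sub_eq_zero.mp
      apply hg_nd
      intro z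
      have h1 : g (J x y) z = lam * (g (φ y) z * g (φ x) x - g (φ y) x * g (φ x) z) := by
        rw [hJ, hW]
      simp only [map_sub, LinearMap.sub_apply, LinearMap.smul_apply, map_smul,
        LinearMap.smulRight_apply, LinearMap.flip_apply, LinearMap.comp_apply, smul_eq_mul, h1]
      ring
    have := htr x
    rw [hform] at this
    rw [map_smul, map_sub, map_smul, trace_smulRight'] at this
    simp only [LinearMap.flip_apply, LinearMap.comp_apply, smul_eq_mul] at this
    have hgyx : g (φ (φ x)) x = g x x := by rw [hφ2]
    rw [hgyx] at this
    rw [← ht] at this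
    linarith [this]
  -- find non-null eigenvectors
  have find : ∀ s : ℝ, s * s = 1 → (∃ v, v ≠ 0 ∧ φ v = s • v) →
      ∃ e, φ e = s • e ∧ g e e ≠ 0 := by
    rintro s hs ⟨v, hv0, hv⟩
    obtain ⟨w, hw⟩ : ∃ w, g v w ≠ 0 := by
      by_contra h
      push_neg at h
      exact hv0 (hg_nd v h)
    set u : V := w + s • φ w with hu
    have hφu : φ u = s • u := by
      simp only [hu, map_add, map_smul, hφ2, smul_add, smul_smul, hs, one_smul, add_comm]
    have hgvu : g v u = 2 * g v w := by
      have : g v (φ w) = s * g v w := by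
        rw [← hφ_sa, hv, map_smul]; simp
      simp only [hu, map_add, map_smul, this, smul_eq_mul]
      rw [← mul_assoc, hs]; ring
    by_cases h1 : g v v ≠ 0
    · exact ⟨v, hv, h1⟩
    by_cases h2 : g u u ≠ 0
    · exact ⟨u, hφu, h2⟩
    push_neg at h1 h2
    refine ⟨v + u, ?_, ?_⟩
    · simp [map_add, hv, hφu, smul_add]
    · simp only [map_add, LinearMap.add_apply, h1, h2, hg_symm u v, hgvu]
      intro hcon
      apply hw
      nlinarith [hcon]
  obtain ⟨ep, hep, hgp⟩ := find 1 (by norm_num) (by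
    obtain ⟨v, h0, h1⟩ := hplus; exact ⟨v, h0, by simp [h1]⟩)
  obtain ⟨em, hem, hgm⟩ := find (-1) (by norm_num) (by
    obtain ⟨v, h0, h1⟩ := hminus; exact ⟨v, h0, by simp [h1]⟩)
  have kp := key ep
  have km := key em
  rw [hep] at kp
  rw [hem] at km
  simp only [map_smul, LinearMap.smul_apply, smul_eq_mul, neg_mul, one_mul, neg_smul, one_smul,
    map_neg, LinearMap.neg_apply] at kp km
  -- kp : lam * (g ep ep * t - g ep ep) = 0 ; km : lam * (-(g em em) * t - g em em) = 0
  have h1 : lam * (t - 1) = 0 := by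
    rcases mul_eq_zero.mp kp with h | h
    · simp [h]
    · have : g ep ep * (t - 1) = 0 := by ring_nf; ring_nf at h; linarith
      rcases mul_eq_zero.mp this with h' | h'
      · exact absurd h' hgp
      · simp [h']
  have h2 : lam * (t + 1) = 0 := by
    rcases mul_eq_zero.mp km with h | h
    · simp [h]
    · have : g em em * (t + 1) = 0 := by ring_nf; ring_nf at h; linarith
      rcases mul_eq_zero.mp this with h' | h'
      · exact absurd h' hgm
      · simp [h']
  nlinarith [h1, h2]
end

section
/- Let φ be a self-adjoint isometry of a positive definite inner product space with φ² = Id, with ±1 eigenspaces of dimensions a^+ ≥ 1 and a^− ≥ 1, and let e^± be unit vectors in the respective eigenspaces. Then for W = λA_φ one has Tr(J_W(e^+)) = λ(a^+ − 1 − a^−) and Tr(J_W(e^−)) = λ(a^− − 1 − a^+). -/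
open scoped RealInnerProductSpace

/-- For a self-adjoint isometry `φ` with `φ² = Id` of a positive
definite inner product space, eigenspace dimensions `a⁺, a⁻ ≥ 1`, unit eigenvectors
`e⁺, e⁻`, and `W = λ A_φ`: `Tr(J_W(e⁺)) = λ(a⁺ − 1 − a⁻)` and
`Tr(J_W(e⁻)) = λ(a⁻ − 1 − a⁺)`. -/
theorem stmt10 {V : Type*} [NormedAddCommGroup V] [InnerProductSpace ℝ V]
    [FiniteDimensional ℝ V]
    (φ : V →ₗ[ℝ] V)
    (hφ_sa : ∀ x y, ⟪φ x, y⟫ = ⟪x, φ y⟫)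
    (hφ2 : ∀ x, φ (φ x) = x)
    (ap am : ℕ)
    (hap : ap = Module.finrank ℝ (LinearMap.ker (φ - LinearMap.id)))
    (ham : am = Module.finrank ℝ (LinearMap.ker (φ + LinearMap.id)))
    (hap1 : 1 ≤ ap) (ham1 : 1 ≤ am)
    (ep em : V)
    (hep : φ ep = ep) (hepu : ‖ep‖ = 1)
    (hem : φ em = -em) (hemu : ‖em‖ = 1)
    (lam : ℝ)
    (W : V → V → V → V → ℝ)
    (hW : ∀ x y z w, W x y z w =
      lam * (⟪φ x, w⟫ * ⟪φ y, z⟫ - ⟪φ x, z⟫ * ⟪φ y, w⟫))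
    (J : V → V →ₗ[ℝ] V)
    (hJ : ∀ x y z, ⟪J x y, z⟫ = W y x x z) :
    LinearMap.trace ℝ V (J ep) = lam * ((ap : ℝ) - 1 - (am : ℝ)) ∧
    LinearMap.trace ℝ V (J em) = lam * ((am : ℝ) - 1 - (ap : ℝ)) := by
  classical
  set b := stdOrthonormalBasis ℝ V with hb
  -- trace via orthonormal basis
  have tr_eq : ∀ f : V →ₗ[ℝ] V,
      LinearMap.trace ℝ V f = ∑ i, ⟪b i, f (b i)⟫ := by
    intro f
    rw [LinearMap.trace_eq_matrix_trace ℝ b.toBasis, Matrix.trace]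
    congr 1
    ext i
    rw [Matrix.diag_apply, LinearMap.toMatrix_apply, OrthonormalBasis.coe_toBasis,
      OrthonormalBasis.coe_toBasis_repr_apply, OrthonormalBasis.repr_apply_apply]
  -- projections
  have hP : LinearMap.IsProj (LinearMap.ker (φ - LinearMap.id))
      ((1/2 : ℝ) • (LinearMap.id + φ)) := by
    constructor
    · intro x
      rw [LinearMap.mem_ker]
      simp only [LinearMap.sub_apply, LinearMap.smul_apply, LinearMap.add_apply,
        LinearMap.id_apply, map_smul, map_add, hφ2]
      module
    · intro x hx
      rw [LinearMap.mem_ker] at hx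
      have hx' : φ x = x := by
        have := hx
        simp only [LinearMap.sub_apply, LinearMap.id_apply, sub_eq_zero] at this
        exact this
      simp only [LinearMap.smul_apply, LinearMap.add_apply, LinearMap.id_apply, hx']
      rw [← two_smul ℝ x, smul_smul]
      norm_num
  have hQ : LinearMap.IsProj (LinearMap.ker (φ + LinearMap.id))
      ((1/2 : ℝ) • (LinearMap.id - φ)) := by
    constructor
    · intro x
      rw [LinearMap.mem_ker]
      simp only [LinearMap.add_apply, LinearMap.smul_apply, LinearMap.sub_apply,
        LinearMap.id_apply, map_smul, map_sub, hφ2]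
      module
    · intro x hx
      rw [LinearMap.mem_ker] at hx
      have hx' : φ x = -x := by
        have := hx
        simp only [LinearMap.add_apply, LinearMap.id_apply, add_eq_zero_iff_eq_neg] at this
        rw [this]
      simp only [LinearMap.smul_apply, LinearMap.sub_apply, LinearMap.id_apply, hx',
        sub_neg_eq_add]
      rw [← two_smul ℝ x, smul_smul]
      norm_num
  have trP := hP.trace
  have trQ := hQ.trace
  have hphi_eq : φ = (1/2 : ℝ) • (LinearMap.id + φ) - (1/2 : ℝ) • (LinearMap.id - φ) := by
    ext x
    simp only [LinearMap.sub_apply, LinearMap.smul_apply, LinearMap.add_apply,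
      LinearMap.id_apply]
    rw [smul_add, smul_sub, add_sub_sub_cancel, ← two_smul ℝ (((1:ℝ)/2) • φ x), smul_smul]
    norm_num
  have trphi : LinearMap.trace ℝ V φ = (ap : ℝ) - (am : ℝ) := by
    rw [hphi_eq, map_sub, trP, trQ, hap, ham]
  -- key formula
  have key : ∀ x : V, LinearMap.trace ℝ V (J x) =
      lam * (⟪φ x, x⟫ * ((ap : ℝ) - (am : ℝ)) - ⟪x, x⟫) := by
    intro x
    rw [tr_eq]
    have step : ∀ i, ⟪b i, J x (b i)⟫ =
        lam * (⟪φ x, x⟫ * ⟪b i, φ (b i)⟫ - ⟪φ x, b i⟫ * ⟪b i, φ x⟫) := by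
      intro i
      rw [real_inner_comm, hJ, hW, hφ_sa (b i) (b i), hφ_sa (b i) x]
      ring
    simp_rw [step]
    rw [← Finset.mul_sum]
    congr 1
    rw [Finset.sum_sub_distrib, ← Finset.mul_sum, ← tr_eq, trphi,
      b.sum_inner_mul_inner (φ x) (φ x), hφ_sa x (φ x), hφ2]
  have hip : ⟪φ ep, ep⟫ = 1 := by
    rw [hep, real_inner_self_eq_norm_sq, hepu]; norm_num
  have hipp : ⟪ep, ep⟫ = (1:ℝ) := by
    rw [real_inner_self_eq_norm_sq, hepu]; norm_num
  have him : ⟪φ em, em⟫ = -1 := by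
    rw [hem, inner_neg_left, real_inner_self_eq_norm_sq, hemu]; norm_num
  have himm : ⟪em, em⟫ = (1:ℝ) := by
    rw [real_inner_self_eq_norm_sq, hemu]; norm_num
  constructor
  · rw [key ep, hip, hipp]; ring
  · rw [key em, him, himm]; ring
end

section
/- Let W = λ A_φ where φ is g-self-adjoint with φ² = 0. Then for any vectors e₁, e₂, the operator W(e₁,e₂,·,·)^♯ (raising an index with g) satisfies (W(e₁,e₂,·,·)^♯)² = 0, i.e. the skew-symmetric curvature operator associated to any 2-plane is nilpotent of order at most 2. -/
/-- If `W = λ A_φ` with `φ` g-self-adjoint and `φ² = 0`, then the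
skew-symmetric curvature operator of any 2-plane is nilpotent of order at most 2. -/
theorem stmt19 {V : Type*} [AddCommGroup V] [Module ℝ V] [FiniteDimensional ℝ V]
    (g : V →ₗ[ℝ] V →ₗ[ℝ] ℝ)
    (hg_symm : ∀ x y, g x y = g y x)
    (hg_nd : ∀ v, (∀ w, g v w = 0) → v = 0)
    (φ : V →ₗ[ℝ] V)
    (hφ_sa : ∀ x y, g (φ x) y = g x (φ y))
    (hφ2 : ∀ x, φ (φ x) = 0)
    (lam : ℝ)
    (W : V → V → V → V → ℝ)
    (hW : ∀ x y z w, W x y z w =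
      lam * (g (φ x) w * g (φ y) z - g (φ x) z * g (φ y) w))
    (e₁ e₂ : V)
    (T : V →ₗ[ℝ] V)
    (hT : ∀ x y, g (T x) y = W e₁ e₂ x y) :
    ∀ x, T (T x) = 0 := by
  have hzero : ∀ a b : V, g (φ a) (φ b) = 0 := by
    intro a b
    rw [hφ_sa, hφ2, map_zero]
  have key : ∀ x e, g (φ e) (T x) = 0 := by
    intro x e
    rw [hg_symm, hT, hW, hzero, hzero]
    ring
  intro x
  apply hg_nd
  intro w
  rw [hT, hW, key, key]
  ring
end
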